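/- Let f : S → ℝ satisfy conditions (C2) and (C3) of a ranking certificate for a reachability game G with target set O, and let σ^f be any memoryless REACH strategy mapping each REACH-state s with f(s) ≥ 0 to a ranking successor of s with respect to f. Then for every state s with f(s) ≥ 0, every infinite sequence starting at s, following the successor relation, and conforming to σ^f visits O within the first ⌈f(s)⌉ steps. -/

import Mathlib

/-- Quantitative soundness from an arbitrary state.
If `f : S → ℝ` satisfies conditions (C2) and (C3) of a ranking certificate and
`σf` is a memoryless REACH strategy mapping each REACH-state `s` with `f s ≥ 0`
(outside the target, where ranking successors are defined) to a ranking successor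
of `s` with respect to `f`, then for every state `s` with `f s ≥ 0`, every infinite
sequence starting at `s`, following the successor relation and conforming to `σf`,
visits `O` within the first `⌈f s⌉` steps. -/
theorem ranking_certificate_quantitative_from_any_state {S : Type*}
    (isReach : S → Prop) (succ : S → Set S)
    (hsucc : ∀ s, (succ s).Nonempty)
    (O : Set S) (f : S → ℝ)
    -- (C2)
    (hC2 : ∀ s, ¬ isReach s → s ∉ O → f s ≥ 0 →
      ∀ s' ∈ succ s, f s - 1 ≥ f s' ∧ f s' ≥ 0)
    -- (C3)
    (hC3 : ∀ s, isReach s → s ∉ O → f s ≥ 0 →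
      ∃ s' ∈ succ s, f s - 1 ≥ f s' ∧ f s' ≥ 0)
    (σf : S → S)
    -- σf is a memoryless REACH strategy
    (hstrat : ∀ s, isReach s → σf s ∈ succ s)
    -- σf chooses a ranking successor whenever f s ≥ 0
    (hrank : ∀ s, isReach s → s ∉ O → f s ≥ 0 →
      f s - 1 ≥ f (σf s) ∧ f (σf s) ≥ 0) :
    ∀ s : S, f s ≥ 0 →
      ∀ ρ : ℕ → S, ρ 0 = s → (∀ i, ρ (i + 1) ∈ succ (ρ i)) →
        (∀ i, isReach (ρ i) → ρ (i + 1) = σf (ρ i)) →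
        ∃ n : ℕ, (n : ℤ) ≤ ⌈f s⌉ ∧ ρ n ∈ O := by
  -- key step lemma
  have step : ∀ ρ : ℕ → S, f (ρ 0) ≥ 0 → ρ 0 ∉ O →
      (∀ i, ρ (i + 1) ∈ succ (ρ i)) →
      (∀ i, isReach (ρ i) → ρ (i + 1) = σf (ρ i)) →
      f (ρ 0) - 1 ≥ f (ρ 1) ∧ f (ρ 1) ≥ 0 := by
    intro ρ h0 hnO hsc hcf
    by_cases hr : isReach (ρ 0)
    · have := hrank (ρ 0) hr hnO h0
      rw [hcf 0 hr]; exact this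
    · exact hC2 (ρ 0) hr hnO h0 (ρ 1) (hsc 0)
  have aux : ∀ k : ℕ, ∀ ρ : ℕ → S, f (ρ 0) ≥ 0 → ⌈f (ρ 0)⌉.toNat ≤ k →
      (∀ i, ρ (i + 1) ∈ succ (ρ i)) →
      (∀ i, isReach (ρ i) → ρ (i + 1) = σf (ρ i)) →
      ∃ n : ℕ, n ≤ k ∧ ρ n ∈ O := by
    intro k
    induction k with
    | zero =>
      intro ρ h0 hk hsc hcf
      refine ⟨0, le_refl _, ?_⟩
      by_contra hnO
      have h1 := step ρ h0 hnO hsc hcf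
      have : (1 : ℝ) ≤ f (ρ 0) := by linarith [h1.1, h1.2]
      have : (1 : ℤ) ≤ ⌈f (ρ 0)⌉ := by exact_mod_cast Int.le_ceil_iff.mpr (by push_cast; linarith)
      omega
    | succ k ih =>
      intro ρ h0 hk hsc hcf
      by_cases hnO : ρ 0 ∈ O
      · exact ⟨0, Nat.zero_le _, hnO⟩
      · have h1 := step ρ h0 hnO hsc hcf
        have hceil : ⌈f (ρ 1)⌉ ≤ ⌈f (ρ 0)⌉ - 1 := by
          have : ⌈f (ρ 1)⌉ ≤ ⌈f (ρ 0) - 1⌉ := Int.ceil_le_ceil h1.1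
          simpa [Int.ceil_sub_one] using this
        have hk' : ⌈f ((fun i => ρ (i + 1)) 0)⌉.toNat ≤ k := by
          simp only [Nat.zero_add]; omega
        obtain ⟨n, hn, hO⟩ := ih (fun i => ρ (i + 1)) h1.2 hk'
          (fun i => hsc (i + 1)) (fun i => hcf (i + 1))
        exact ⟨n + 1, by omega, hO⟩
  intro s hs ρ hρ0 hsc hcf
  obtain ⟨n, hn, hO⟩ := aux ⌈f s⌉.toNat ρ (hρ0 ▸ hs) (by rw [hρ0]) hsc hcf
  refine ⟨n, ?_, hO⟩
  have : (0 : ℤ) ≤ ⌈f s⌉ := Int.ceil_nonneg hs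
  omega
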